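/- Let k be a positive integer and let p be a pattern containing exactly k distinct variables. If p has length at least 4^k, then p is 2-avoidable; that is, there exist infinitely many words over a 2-letter alphabet having no factor that is an instance of p. -/

import Mathlib

/-- A word `w` is an instance of the pattern `p` if there is a non-erasing
substitution (equivalently, a non-erasing monoid morphism on free monoids)
sending `p` to `w`. -/
def IsInstance {Δ α : Type*} (p : List Δ) (w : List α) : Prop :=
  ∃ f : Δ → List α, (∀ v, f v ≠ []) ∧ (p.map f).flatten = w

/-- A word `w` avoids the pattern `p` if no factor of `w` is an instance of `p`. -/
def Avoids {Δ α : Type*} (w : List α) (p : List Δ) : Prop :=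
  ∀ x : List α, x <:+: w → ¬ IsInstance p x


lemma avoids_of_infix {Δ α : Type*} {w x : List α} {p : List Δ}
    (h : Avoids w p) (hx : x <:+: w) : Avoids x p :=
  fun y hy => h y (hy.trans hx)

lemma IsInstance.ne_nil {Δ α : Type*} {p : List Δ} {w : List α}
    (hp : p ≠ []) (h : IsInstance p w) : w ≠ [] := by
  rcases h with ⟨f, hf, rfl⟩
  rcases p with _ | ⟨v, p⟩
  · exact absurd rfl hp
  · simp only [List.map_cons, List.flatten_cons, ne_eq, List.append_eq_nil_iff]
    intro h1
    exact hf v h1.1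

lemma avoids_of_pattern_infix {Δ α : Type*} {w : List α} {p q : List Δ}
    (hq : q <:+: p) (h : Avoids w q) : Avoids w p := by
  intro x hx hinst
  rcases hinst with ⟨f, hf, rfl⟩
  rcases hq with ⟨s, t, rfl⟩
  apply h ((q.map f).flatten)
  · refine List.IsInfix.trans ?_ hx
    refine ⟨(s.map f).flatten, (t.map f).flatten, ?_⟩
    simp [List.flatten_append]
  · exact ⟨f, hf, rfl⟩


/-- Thue–Morse sequence over `Fin 2`. -/
def tm : ℕ → Fin 2
  | 0 => 0
  | n+1 => tm ((n+1)/2) + (if (n+1) % 2 = 0 then 0 else 1 : Fin 2)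
decreasing_by exact Nat.div_lt_self (Nat.succ_pos n) one_lt_two

lemma tm_two_mul (m : ℕ) : tm (2*m) = tm m := by
  cases m with
  | zero => rfl
  | succ k =>
    have h : 2*(k+1) = (2*k+1)+1 := by ring
    rw [h, tm]
    have h1 : ((2*k+1)+1)/2 = k+1 := by omega
    have h2 : ((2*k+1)+1) % 2 = 0 := by omega
    rw [h1, h2]
    simp

lemma tm_two_mul_add_one (m : ℕ) : tm (2*m+1) = tm m + 1 := by
  rw [show 2*m+1 = (2*m)+1 from rfl, tm]
  have h1 : (2*m+1)/2 = m := by omega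
  have h2 : (2*m+1) % 2 = 1 := by omega
  rw [h1, h2]
  simp

lemma fin2_add_one_ne (x : Fin 2) : x + 1 ≠ x := by revert x; decide

lemma tm_no_triple (n : ℕ) : ¬ (tm n = tm (n+1) ∧ tm (n+1) = tm (n+2)) := by
  rcases Nat.even_or_odd n with ⟨m, hm⟩ | ⟨m, hm⟩
  · subst hm
    rintro ⟨h1, -⟩
    rw [show m + m = 2*m by ring] at h1
    rw [tm_two_mul, show 2*m+1 = 2*m+1 from rfl, tm_two_mul_add_one] at h1
    exact fin2_add_one_ne (tm m) h1.symm
  · subst hm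
    rintro ⟨-, h2⟩
    rw [show 2*m+1+1 = 2*(m+1) by ring, show 2*m+1+2 = 2*(m+1)+1 by ring] at h2
    rw [tm_two_mul, tm_two_mul_add_one] at h2
    exact fin2_add_one_ne (tm (m+1)) h2.symm

/-- The Thue–Morse sequence contains no overlap. -/
theorem tm_no_overlap : ∀ q, 1 ≤ q → ∀ i, ¬ (∀ j ≤ q, tm (i+j) = tm (i+j+q)) := by
  intro q
  induction q using Nat.strong_induction_on with
  | _ q IH =>
  intro hq i H
  rcases Nat.even_or_odd q with ⟨r, hr⟩ | ⟨r, hr⟩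
  · -- q = 2r even
    have hr1 : 1 ≤ r := by omega
    have hq2 : q = 2*r := by omega
    -- new overlap at i' = i/2 with period r
    apply IH r (by omega) hr1 (i/2)
    intro j hj
    -- find n ∈ {2*(i/2+j), 2*(i/2+j)+1} ∩ [i, i+q] with tm (n/2) = tm (n/2 + r)
    set m := i/2 + j with hm
    by_cases hge : i ≤ 2*m
    · -- use even position n = 2m
      have h := H (2*m - i) (by omega)
      rw [show i + (2*m - i) = 2*m by omega, show 2*m + q = 2*(m+r) by omega] at h
      rw [tm_two_mul, tm_two_mul] at h
      exact h
    · -- 2m = i - 1, i odd; use n = 2m+1 = i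
      have h := H (2*m+1 - i) (by omega)
      rw [show i + (2*m+1-i) = 2*m+1 by omega, show 2*m+1+q = 2*(m+r)+1 by omega] at h
      rw [tm_two_mul_add_one, tm_two_mul_add_one] at h
      exact add_right_cancel h
  · -- q = 2r+1 odd
    have hq2 : q = 2*r+1 := by omega
    set m0 := (i+1)/2 with hm0
    -- (A) at m : 2m ∈ [i, i+q] → tm m = tm (m+r) + 1
    have A : ∀ m, i ≤ 2*m → 2*m ≤ i + q → tm m = tm (m+r) + 1 := by
      intro m h1 h2
      have h := H (2*m - i) (by omega)
      rw [show i + (2*m - i) = 2*m by omega, show 2*m + q = 2*(m+r)+1 by omega] at h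
      rw [tm_two_mul, tm_two_mul_add_one] at h
      exact h
    -- (B) at m : 2m+1 ∈ [i, i+q] → tm m + 1 = tm (m+r+1)
    have B : ∀ m, i ≤ 2*m+1 → 2*m+1 ≤ i + q → tm m + 1 = tm (m+r+1) := by
      intro m h1 h2
      have h := H (2*m+1 - i) (by omega)
      rw [show i + (2*m+1 - i) = 2*m+1 by omega, show 2*m+1 + q = 2*(m+r+1) by omega] at h
      rw [tm_two_mul_add_one, tm_two_mul] at h
      exact h
    have e2m0 : i ≤ 2*m0 ∧ 2*m0 ≤ i+1 := by omega
    rcases Nat.lt_or_ge q 3 with hq3 | hq3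
    · -- q = 1 : triple
      have hq1 : q = 1 := by omega
      have t1 := H 0 (by omega)
      have t2 := H 1 (by omega)
      rw [hq1] at t1 t2
      exact tm_no_triple i ⟨by simpa using t1, by simpa using t2⟩
    · -- q ≥ 3 odd, r ≥ 1
      have hr1 : 1 ≤ r := by omega
      have a0 := A m0 (by omega) (by omega)
      have b0 := B m0 (by omega) (by omega)
      have a1 := A (m0+1) (by omega) (by omega)
      -- E : tm (m0+1) = tm m0
      have E : tm (m0+1) = tm m0 := by
        rw [show m0+1+r = m0+r+1 by ring] at a1
        rw [a1, ← b0, add_assoc, show (1 : Fin 2) + 1 = 0 by decide, add_zero]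
      rcases Nat.lt_or_ge q 5 with hq5 | hq5
      · -- q = 3, r = 1: a0 : tm m0 = tm (m0+1) + 1 = tm m0 + 1, contradiction
        have hrr : r = 1 := by omega
        rw [hrr] at a0
        rw [E] at a0
        exact fin2_add_one_ne (tm m0) a0.symm
      · -- q ≥ 5: also b1, get triple at m0 + r
        have b1 := B (m0+1) (by omega) (by omega)
        -- a0 : tm m0 = tm (m0+r) + 1  →  tm (m0+r) = tm m0 + 1
        have ha : tm (m0+r) = tm m0 + 1 := by
          have := a0
          have h2 : tm m0 + 1 = tm (m0+r) + 1 + 1 := by rw [← this]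
          rw [add_assoc] at h2
          have h3 : (1 : Fin 2) + 1 = 0 := by decide
          rw [h3, add_zero] at h2
          exact h2.symm
        have hb : tm (m0+r+1) = tm m0 + 1 := by rw [← b0]
        have hc : tm (m0+r+2) = tm m0 + 1 := by
          rw [show m0+r+2 = m0+1+r+1 by ring, ← b1, E]
        exact tm_no_triple (m0+r) ⟨by rw [ha, hb], by rw [hb, show m0+r+1+1 = m0+r+2 by ring, hc]⟩


lemma tm_word_avoids_four_pow {X : List (Fin 2)} (hX : X ≠ []) (N : ℕ) :
    ¬ (X ++ (X ++ (X ++ X))) <:+: (List.range N).map tm := by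
  set L := X.length with hL
  have hL1 : 1 ≤ L := by rw [hL]; exact List.length_pos_iff.2 hX
  set X3 := X ++ (X ++ X) with hX3
  set X4 := X ++ (X ++ (X ++ X)) with hX4
  have hX4' : X4 = X3 ++ X := by simp [hX4, hX3, List.append_assoc]
  have hX4'' : X4 = X ++ X3 := by simp [hX4, hX3]
  have lX3 : X3.length = 3 * L := by simp [hX3]; omega
  have lX4 : X4.length = 4 * L := by simp [hX4]; omega
  have hper : ∀ j, j < 3*L → X4[j]? = X4[j+L]? := by
    intro j h1
    have e1 : X4[j]? = X3[j]? := by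
      conv_lhs => rw [hX4']
      rw [List.getElem?_append_left (by omega)]
    have e2 : X4[j+L]? = X3[j]? := by
      conv_lhs => rw [hX4'']
      rw [List.getElem?_append_right (by omega)]
      congr 1
      omega
    rw [e1, e2]
  rintro ⟨s, t, hst⟩
  set i := s.length with hi
  rw [List.append_assoc] at hst
  have hNlen : N = i + (4*L + t.length) := by
    have := congrArg List.length hst
    simp [lX4] at this
    omega
  have hidx : ∀ j, j < 4*L → X4[j]? = some (tm (i + j)) := by
    intro j h
    have hlt : i + j < N := by omega
    have e2 : ((List.range N).map tm)[i+j]? = some (tm (i+j)) := by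
      rw [List.getElem?_map, List.getElem?_range hlt]; rfl
    rw [← hst] at e2
    rw [List.getElem?_append_right (by omega)] at e2
    rw [show i + j - s.length = j from by omega] at e2
    rw [List.getElem?_append_left (by omega)] at e2
    exact e2
  apply tm_no_overlap L hL1 i
  intro j hj
  have h1 : j < 4*L := by omega
  have h2 : j + L < 4*L := by omega
  have := (hidx j h1).symm.trans ((hper j (by omega)).trans (hidx (j+L) h2))
  rw [show i + (j + L) = i + j + L from by omega] at this
  exact Option.some.inj this

lemma single_var_avoidable {Δ : Type*} {q : List Δ} {v : Δ}
    (hall : ∀ u ∈ q, u = v) (hlen : 4 ≤ q.length) (N : ℕ) :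
    Avoids ((List.range N).map tm) q := by
  intro x hx hinst
  rcases hinst with ⟨f, hf, rfl⟩
  set X := f v with hXdef
  have hmap : q.map f = List.replicate (q.map f).length X := by
    apply List.eq_replicate_of_mem
    intro w hw
    rcases List.mem_map.1 hw with ⟨u, hu, rfl⟩
    rw [hall u hu]
  rw [List.length_map] at hmap
  have hpre : (X ++ (X ++ (X ++ X))) <+: (List.replicate q.length X).flatten := by
    have h4 : q.length = 4 + (q.length - 4) := by omega
    rw [h4, List.replicate_add, List.flatten_append]
    refine ⟨(List.replicate (q.length - 4) X).flatten, ?_⟩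
    simp [List.replicate_succ]
  have hinf : (X ++ (X ++ (X ++ X))) <:+: (List.range N).map tm := by
    refine List.IsInfix.trans ?_ hx
    rw [hmap]
    exact hpre.isInfix
  exact tm_word_avoids_four_pow (hf v) N hinf


/-- Every word of length ≥ 4^k over ≤ k letters has a nonempty factor in which
every occurring letter occurs at least 4 times. -/
theorem zimin4 {Δ : Type*} [DecidableEq Δ] :
    ∀ k (w : List Δ), w.toFinset.card ≤ k → 4 ^ k ≤ w.length →
      ∃ q : List Δ, q ≠ [] ∧ q <:+: w ∧ ∀ v ∈ q, 4 ≤ q.count v := by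
  intro k
  induction k with
  | zero =>
    intro w hcard hlen
    simp at hlen
    rcases List.exists_mem_of_length_pos (by omega : 0 < w.length) with ⟨a, ha⟩
    have : a ∈ w.toFinset := List.mem_toFinset.2 ha
    have := Finset.card_pos.2 ⟨a, this⟩
    omega
  | succ k IH =>
    intro w hcard hlen
    set n := 4 ^ k with hn
    have hlen' : 4 * n ≤ w.length := by
      rw [hn]; calc 4 * 4 ^ k = 4 ^ (k+1) := by ring
      _ ≤ w.length := hlen
    -- four blocks
    set w1 := w.drop n with hw1
    set w2 := w1.drop n with hw2
    set w3 := w2.drop n with hw3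
    set B0 := w.take n with hB0
    set B1 := w1.take n with hB1
    set B2 := w2.take n with hB2
    set B3 := w3.take n with hB3
    have hnpos : 0 < n := hn ▸ pow_pos (by norm_num) k
    have l1 : w1.length = w.length - n := by simp [hw1]
    have l2 : w2.length = w.length - 2*n := by simp [hw2, l1]; omega
    have l3 : w3.length = w.length - 3*n := by simp [hw3, l2]; omega
    have lb0 : B0.length = n := by simp [hB0]; omega
    have lb1 : B1.length = n := by simp [hB1, l1]; omega
    have lb2 : B2.length = n := by simp [hB2, l2]; omega
    have lb3 : B3.length = n := by simp [hB3, l3]; omega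
    have inf1 : w1 <:+: w := (List.drop_suffix _ _).isInfix
    have inf2 : w2 <:+: w := ((List.drop_suffix _ _).isInfix).trans inf1
    have inf3 : w3 <:+: w := ((List.drop_suffix _ _).isInfix).trans inf2
    have infB0 : B0 <:+: w := (List.take_prefix _ _).isInfix
    have infB1 : B1 <:+: w := ((List.take_prefix _ _).isInfix).trans inf1
    have infB2 : B2 <:+: w := ((List.take_prefix _ _).isInfix).trans inf2
    have infB3 : B3 <:+: w := ((List.take_prefix _ _).isInfix).trans inf3
    -- if some block misses a letter of w, recurse
    by_cases hmiss : ∃ B ∈ [B0, B1, B2, B3], ∃ a ∈ w, a ∉ B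
    · rcases hmiss with ⟨B, hBmem, a, haw, haB⟩
      have hBinf : B <:+: w := by
        simp only [List.mem_cons, List.not_mem_nil, or_false] at hBmem
        rcases hBmem with rfl | rfl | rfl | rfl <;> assumption
      have hBlen : B.length = n := by
        simp only [List.mem_cons, List.not_mem_nil, or_false] at hBmem
        rcases hBmem with rfl | rfl | rfl | rfl <;> assumption
      have hsub : B.toFinset ⊆ w.toFinset.erase a := by
        intro x hx
        rcases List.mem_toFinset.1 hx with hx'
        refine Finset.mem_erase.2 ⟨?_, List.mem_toFinset.2 (hBinf.subset hx')⟩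
        rintro rfl; exact haB hx'
      have hcard' : B.toFinset.card ≤ k := by
        calc B.toFinset.card ≤ (w.toFinset.erase a).card := Finset.card_le_card hsub
        _ = w.toFinset.card - 1 := Finset.card_erase_of_mem (List.mem_toFinset.2 haw)
        _ ≤ k := by omega
      rcases IH B hcard' (by omega) with ⟨q, hq1, hq2, hq3⟩
      exact ⟨q, hq1, hq2.trans hBinf, hq3⟩
    · -- every letter of w is in every block; take q = w
      push_neg at hmiss
      refine ⟨w, ?_, List.infix_rfl, ?_⟩
      · intro h; rw [h] at hlen'; simp at hlen'; omega
      · intro v hv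
        have hcount : ∀ B ∈ [B0, B1, B2, B3], 1 ≤ B.count v := by
          intro B hB
          exact List.count_pos_iff.2 (hmiss B hB v hv)
        have e0 : w.count v = B0.count v + w1.count v := by
          conv_lhs => rw [← List.take_append_drop n w]
          rw [List.count_append]
        have e1 : w1.count v = B1.count v + w2.count v := by
          conv_lhs => rw [← List.take_append_drop n w1]
          rw [List.count_append]
        have e2 : w2.count v = B2.count v + w3.count v := by
          conv_lhs => rw [← List.take_append_drop n w2]
          rw [List.count_append]
        have e3 : B3.count v ≤ w3.count v := by
          rw [hB3]; exact (List.take_sublist n w3).count_le v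
        have c0 := hcount B0 (by simp)
        have c1 := hcount B1 (by simp)
        have c2 := hcount B2 (by simp)
        have c3 := hcount B3 (by simp)
        omega

set_option linter.unusedSectionVars false

section Counting

open Finset

/-- all binary words of length n -/
def allWords : ℕ → Finset (List (Fin 2))
  | 0 => {[]}
  | n+1 => ((Finset.univ : Finset (Fin 2)) ×ˢ allWords n).image (fun p => p.1 :: p.2)

lemma mem_allWords : ∀ n (w : List (Fin 2)), w ∈ allWords n ↔ w.length = n := by
  intro n
  induction n with
  | zero => intro w; simp [allWords, List.length_eq_zero_iff]
  | succ n IH =>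
    intro w
    simp only [allWords, Finset.mem_image, Finset.mem_product, Finset.mem_univ, true_and]
    constructor
    · rintro ⟨⟨b, w'⟩, hw', rfl⟩
      have := (IH w').1 hw'
      simp [this]
    · intro hlen
      rcases w with _ | ⟨b, w'⟩
      · simp at hlen
      · exact ⟨(b, w'), by simp [IH, List.length_cons] at hlen ⊢; omega, rfl⟩

lemma card_allWords : ∀ n, (allWords n).card = 2 ^ n := by
  intro n
  induction n with
  | zero => rfl
  | succ n IH =>
    rw [allWords, Finset.card_image_of_injOn, Finset.card_product, Finset.card_univ]
    · simp [IH, pow_succ]; ring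
    · rintro ⟨b, w⟩ _ ⟨b', w'⟩ _ h
      simp only [List.cons.injEq] at h
      simp [h.1, h.2]

variable {Δ : Type*} [DecidableEq Δ]

open Classical in
/-- words of length n avoiding q -/
noncomputable def AW (q : List Δ) (n : ℕ) : Finset (List (Fin 2)) :=
  (allWords n).filter (fun w => Avoids w q)

open Classical in
/-- instances of q of length ℓ -/
noncomputable def LW (q : List Δ) (ℓ : ℕ) : Finset (List (Fin 2)) :=
  (allWords ℓ).filter (fun x => IsInstance q x)

lemma mem_AW {q : List Δ} {n : ℕ} {w : List (Fin 2)} :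
    w ∈ AW q n ↔ w.length = n ∧ Avoids w q := by
  classical
  rw [AW]
  simp [Finset.mem_filter, mem_allWords]

lemma mem_LW {q : List Δ} {ℓ : ℕ} {x : List (Fin 2)} :
    x ∈ LW q ℓ ↔ x.length = ℓ ∧ IsInstance q x := by
  classical
  rw [LW]
  simp [Finset.mem_filter, mem_allWords]

/-- Finset of candidate length-data encodings: lists of nonempty words with weighted length ℓ -/
def TT : List ℕ → ℕ → Finset (List (List (Fin 2)))
  | [], ℓ => if ℓ = 0 then {([] : List (List (Fin 2)))} else ∅
  | m :: M, ℓ => ((Finset.Icc 1 ℓ).filter (fun l => m * l ≤ ℓ)).biUnion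
      (fun l => ((allWords l) ×ˢ TT M (ℓ - m * l)).image (fun p => p.1 :: p.2))

lemma mem_TT : ∀ (M : List ℕ), (∀ m ∈ M, 1 ≤ m) → ∀ (ℓ : ℕ) (ws : List (List (Fin 2))),
    ws ∈ TT M ℓ ↔ ws.length = M.length ∧ (∀ w ∈ ws, w ≠ []) ∧
      (List.zipWith (fun m (w : List (Fin 2)) => m * w.length) M ws).sum = ℓ := by
  intro M
  induction M with
  | nil =>
    intro _ ℓ ws
    rcases Nat.eq_zero_or_pos ℓ with rfl | hℓ
    · simp [TT, List.length_eq_zero_iff]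
      rintro rfl; simp
    · simp only [TT, if_neg (by omega : ℓ ≠ 0)]
      simp only [Finset.notMem_empty, false_iff, List.length_nil, List.length_eq_zero_iff]
      rintro ⟨rfl, -, h⟩
      simp at h
      omega
  | cons m M IH =>
    intro hM ℓ ws
    have hm : 1 ≤ m := hM m (by simp)
    have hM' : ∀ m ∈ M, 1 ≤ m := fun m hm => hM m (by simp [hm])
    simp only [TT, Finset.mem_biUnion, Finset.mem_image, Finset.mem_product, Finset.mem_filter,
      Finset.mem_Icc]
    constructor
    · rintro ⟨l, ⟨⟨hl1, hl2⟩, hml⟩, ⟨x, ws'⟩, ⟨hx, hws'⟩, rfl⟩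
      rw [mem_allWords] at hx
      rcases (IH hM' _ ws').1 hws' with ⟨h1, h2, h3⟩
      refine ⟨by simp [h1], ?_, ?_⟩
      · intro w hw
        rcases List.mem_cons.1 hw with rfl | hw'
        · intro hnil; rw [hnil] at hx; simp at hx; omega
        · exact h2 w hw'
      · simp only [List.zipWith_cons_cons, List.sum_cons, hx, h3]
        omega
    · rintro ⟨h1, h2, h3⟩
      rcases ws with _ | ⟨x, ws'⟩
      · simp at h1
      · simp only [List.length_cons, add_left_inj] at h1
        simp only [List.zipWith_cons_cons, List.sum_cons] at h3
        have hx1 : 1 ≤ x.length := by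
          have := h2 x (by simp)
          exact List.length_pos_iff.2 this
        have hsum' : (List.zipWith (fun m (w : List (Fin 2)) => m * w.length) M ws').sum
            = ℓ - m * x.length := by omega
        refine ⟨x.length, ⟨⟨hx1, ?_⟩, ?_⟩, ⟨x, ws'⟩, ⟨?_, ?_⟩, rfl⟩
        · calc x.length ≤ m * x.length := Nat.le_mul_of_pos_left _ hm
          _ ≤ ℓ := by omega
        · omega
        · rw [mem_allWords]
        · exact (IH hM' _ ws').2 ⟨h1, fun w hw => h2 w (by simp [hw]), hsum'⟩

end Counting

section Numeric

open Finset

lemma geom_partial (y : ℚ) (hy0 : 0 ≤ y) (hy1 : y < 1) :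
    ∀ N, (∑ l ∈ Finset.Icc 1 N, y ^ l) * (1 - y) = y - y ^ (N+1) := by
  intro N
  induction N with
  | zero => simp
  | succ N IH =>
    rw [Finset.sum_Icc_succ_top (by omega), add_mul, IH]
    ring

lemma geom_partial_le (y : ℚ) (hy0 : 0 ≤ y) (hy1 : y < 1) (N : ℕ) :
    (∑ l ∈ Finset.Icc 1 N, y ^ l) ≤ y / (1 - y) := by
  rw [le_div_iff₀ (by linarith)]
  rw [geom_partial y hy0 hy1 N]
  have : 0 ≤ y ^ (N+1) := pow_nonneg hy0 _
  linarith

/-- the per-variable factor bound -/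
lemma var_factor_bound (m : ℕ) (hm : 4 ≤ m) (N : ℕ) :
    (∑ l ∈ Finset.Icc 1 N, (2:ℚ)^l * ((4:ℚ)/7)^(m*l)) ≤ 512/1889 := by
  have hx0 : (0:ℚ) ≤ 4/7 := by norm_num
  have hx1 : (4:ℚ)/7 ≤ 1 := by norm_num
  have hterm : ∀ l ∈ Finset.Icc 1 N, (2:ℚ)^l * ((4:ℚ)/7)^(m*l) ≤ ((512:ℚ)/2401)^l := by
    intro l hl
    have h1 : ((4:ℚ)/7)^(m*l) ≤ ((4:ℚ)/7)^(4*l) := by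
      apply pow_le_pow_of_le_one hx0 hx1
      exact Nat.mul_le_mul_right l hm
    calc (2:ℚ)^l * ((4:ℚ)/7)^(m*l) ≤ (2:ℚ)^l * ((4:ℚ)/7)^(4*l) := by
          apply mul_le_mul_of_nonneg_left h1 (by positivity)
      _ = ((512:ℚ)/2401)^l := by
          rw [pow_mul]
          rw [← mul_pow]
          norm_num
  calc (∑ l ∈ Finset.Icc 1 N, (2:ℚ)^l * ((4:ℚ)/7)^(m*l))
      ≤ ∑ l ∈ Finset.Icc 1 N, ((512:ℚ)/2401)^l := Finset.sum_le_sum hterm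
    _ ≤ ((512:ℚ)/2401) / (1 - 512/2401) := geom_partial_le _ (by norm_num) (by norm_num) N
    _ = 512/1889 := by norm_num

end Numeric

section TTBound

open Finset

lemma cardTT_cons (m : ℕ) (M : List ℕ) (ℓ : ℕ) :
    (TT (m :: M) ℓ).card ≤
      ∑ l ∈ (Finset.Icc 1 ℓ).filter (fun l => m * l ≤ ℓ), 2^l * (TT M (ℓ - m*l)).card := by
  rw [TT]
  refine le_trans (Finset.card_biUnion_le) (Finset.sum_le_sum ?_)
  intro l hl
  calc (((allWords l) ×ˢ TT M (ℓ - m * l)).image (fun p => p.1 :: p.2)).card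
      ≤ ((allWords l) ×ˢ TT M (ℓ - m * l)).card := Finset.card_image_le
    _ = (allWords l).card * (TT M (ℓ - m*l)).card := Finset.card_product _ _
    _ = 2^l * (TT M (ℓ - m*l)).card := by rw [card_allWords]

lemma TT_sum_bound : ∀ (M : List ℕ), (∀ m ∈ M, 4 ≤ m) → ∀ N,
    (∑ ℓ ∈ Finset.range (N+1), ((TT M ℓ).card : ℚ) * ((4:ℚ)/7)^ℓ)
      ≤ ((512:ℚ)/1889) ^ M.length := by
  intro M
  induction M with
  | nil =>
    intro _ N
    have hcard : ∀ ℓ, ((TT ([] : List ℕ) ℓ).card : ℚ) = if ℓ = 0 then 1 else 0 := by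
      intro ℓ
      rw [TT]
      split <;> simp
    calc (∑ ℓ ∈ Finset.range (N+1), ((TT ([]:List ℕ) ℓ).card : ℚ) * ((4:ℚ)/7)^ℓ)
        = ∑ ℓ ∈ Finset.range (N+1), (if ℓ = 0 then ((4:ℚ)/7)^ℓ else 0) := by
          apply Finset.sum_congr rfl
          intro ℓ _
          rw [hcard]
          split <;> simp
      _ = ((4:ℚ)/7)^0 := by
          rw [Finset.sum_ite_eq' (Finset.range (N+1)) 0 (fun ℓ => ((4:ℚ)/7)^ℓ)]
          simp
      _ ≤ 1 := by norm_num
      _ = ((512:ℚ)/1889) ^ ([] : List ℕ).length := by simp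
  | cons m M IH =>
    intro hM N
    have hm : 4 ≤ m := hM m (by simp)
    have hM' : ∀ m' ∈ M, 4 ≤ m' := fun m' h => hM m' (by simp [h])
    set x : ℚ := (4:ℚ)/7 with hxdef
    have hx0 : (0:ℚ) ≤ x := by norm_num [hxdef]
    -- step 1: bound the card and distribute
    have step1 : (∑ ℓ ∈ Finset.range (N+1), ((TT (m::M) ℓ).card : ℚ) * x^ℓ)
        ≤ ∑ ℓ ∈ Finset.range (N+1), ∑ l ∈ (Finset.Icc 1 ℓ).filter (fun l => m * l ≤ ℓ),
            ((2:ℚ)^l * ((TT M (ℓ - m*l)).card : ℚ)) * x^ℓ := by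
      apply Finset.sum_le_sum
      intro ℓ _
      rw [← Finset.sum_mul]
      apply mul_le_mul_of_nonneg_right _ (by positivity)
      have := cardTT_cons m M ℓ
      calc ((TT (m::M) ℓ).card : ℚ)
          ≤ ((∑ l ∈ (Finset.Icc 1 ℓ).filter (fun l => m * l ≤ ℓ), 2^l * (TT M (ℓ - m*l)).card : ℕ) : ℚ) := by
            exact_mod_cast this
        _ = ∑ l ∈ (Finset.Icc 1 ℓ).filter (fun l => m * l ≤ ℓ), (2:ℚ)^l * ((TT M (ℓ - m*l)).card : ℚ) := by
            push_cast
            rfl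
    -- step 2: rewrite terms and pass to sigma
    have step2 : (∑ ℓ ∈ Finset.range (N+1), ∑ l ∈ (Finset.Icc 1 ℓ).filter (fun l => m * l ≤ ℓ),
            ((2:ℚ)^l * ((TT M (ℓ - m*l)).card : ℚ)) * x^ℓ)
        = ∑ p ∈ (Finset.range (N+1)).sigma (fun ℓ => (Finset.Icc 1 ℓ).filter (fun l => m * l ≤ ℓ)),
            ((2:ℚ)^p.2 * x^(m*p.2)) * (((TT M (p.1 - m*p.2)).card : ℚ) * x^(p.1 - m*p.2)) := by
      rw [Finset.sum_sigma']
      apply Finset.sum_congr rfl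
      intro p hp
      rcases Finset.mem_sigma.1 hp with ⟨h1, h2⟩
      rcases Finset.mem_filter.1 h2 with ⟨-, hml⟩
      have hsplit : x^p.1 = x^(m*p.2) * x^(p.1 - m*p.2) := by
        rw [← pow_add]
        congr 1
        omega
      rw [hsplit]
      ring
    -- step 3: reindex into a product and bound by subset
    have step3 : (∑ p ∈ (Finset.range (N+1)).sigma (fun ℓ => (Finset.Icc 1 ℓ).filter (fun l => m * l ≤ ℓ)),
            ((2:ℚ)^p.2 * x^(m*p.2)) * (((TT M (p.1 - m*p.2)).card : ℚ) * x^(p.1 - m*p.2)))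
        ≤ ∑ r ∈ (Finset.Icc 1 N) ×ˢ (Finset.range (N+1)),
            ((2:ℚ)^r.1 * x^(m*r.1)) * (((TT M r.2).card : ℚ) * x^r.2) := by
      set S1 := (Finset.range (N+1)).sigma (fun ℓ => (Finset.Icc 1 ℓ).filter (fun l => m * l ≤ ℓ)) with hS1
      set e : (Σ _ : ℕ, ℕ) → ℕ × ℕ := fun p => (p.2, p.1 - m*p.2) with he
      set G : ℕ × ℕ → ℚ := fun r => ((2:ℚ)^r.1 * x^(m*r.1)) * (((TT M r.2).card : ℚ) * x^r.2) with hG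
      have hmem : ∀ p ∈ S1, p.1 < N+1 ∧ 1 ≤ p.2 ∧ p.2 ≤ p.1 ∧ m * p.2 ≤ p.1 := by
        intro p hp
        rcases Finset.mem_sigma.1 hp with ⟨h1, h2⟩
        rcases Finset.mem_filter.1 h2 with ⟨h2', h3⟩
        rcases Finset.mem_Icc.1 h2' with ⟨h4, h5⟩
        exact ⟨Finset.mem_range.1 h1, h4, h5, h3⟩
      have hinj : ∀ p ∈ S1, ∀ p' ∈ S1, e p = e p' → p = p' := by
        intro p hp p' hp' heq
        rcases hmem p hp with ⟨-, -, -, h1⟩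
        rcases hmem p' hp' with ⟨-, -, -, h1'⟩
        have e1 : p.2 = p'.2 := congrArg Prod.fst heq
        have e2 : p.1 - m*p.2 = p'.1 - m*p'.2 := congrArg Prod.snd heq
        have e3 : m * p.2 = m * p'.2 := by rw [e1]
        have : p.1 = p'.1 := by omega
        exact Sigma.ext this (by simp [e1])
      have himg : S1.image e ⊆ (Finset.Icc 1 N) ×ˢ (Finset.range (N+1)) := by
        intro r hr
        rcases Finset.mem_image.1 hr with ⟨p, hp, rfl⟩
        rcases hmem p hp with ⟨h1, h2, h3, h4⟩
        simp only [Finset.mem_product, Finset.mem_Icc, Finset.mem_range, he]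
        refine ⟨⟨h2, by omega⟩, by omega⟩
      calc (∑ p ∈ S1, ((2:ℚ)^p.2 * x^(m*p.2)) * (((TT M (p.1 - m*p.2)).card : ℚ) * x^(p.1 - m*p.2)))
          = ∑ p ∈ S1, G (e p) := rfl
        _ = ∑ r ∈ S1.image e, G r := (Finset.sum_image hinj).symm
        _ ≤ ∑ r ∈ (Finset.Icc 1 N) ×ˢ (Finset.range (N+1)), G r := by
            apply Finset.sum_le_sum_of_subset_of_nonneg himg
            intro r _ _
            rw [hG]
            positivity
    -- step 4: factor the product sum
    have step4 : (∑ r ∈ (Finset.Icc 1 N) ×ˢ (Finset.range (N+1)),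
            ((2:ℚ)^r.1 * x^(m*r.1)) * (((TT M r.2).card : ℚ) * x^r.2))
        = (∑ l ∈ Finset.Icc 1 N, (2:ℚ)^l * x^(m*l)) *
          (∑ j ∈ Finset.range (N+1), ((TT M j).card : ℚ) * x^j) := by
      rw [Finset.sum_mul_sum]
      rw [Finset.sum_product]
    have hfac1 : (∑ l ∈ Finset.Icc 1 N, (2:ℚ)^l * x^(m*l)) ≤ 512/1889 :=
      var_factor_bound m hm N
    have hfac2 : (∑ j ∈ Finset.range (N+1), ((TT M j).card : ℚ) * x^j) ≤ ((512:ℚ)/1889)^M.length :=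
      IH hM' N
    have hfac1' : (0:ℚ) ≤ ∑ l ∈ Finset.Icc 1 N, (2:ℚ)^l * x^(m*l) := by
      apply Finset.sum_nonneg
      intro l _
      positivity
    have hfac2' : (0:ℚ) ≤ ∑ j ∈ Finset.range (N+1), ((TT M j).card : ℚ) * x^j := by
      apply Finset.sum_nonneg
      intro j _
      positivity
    calc (∑ ℓ ∈ Finset.range (N+1), ((TT (m::M) ℓ).card : ℚ) * x^ℓ)
        ≤ _ := step1
      _ = _ := step2
      _ ≤ _ := step3
      _ = _ := step4
      _ ≤ ((512:ℚ)/1889) * ((512:ℚ)/1889)^M.length := by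
          apply mul_le_mul hfac1 hfac2 hfac2' (by norm_num)
      _ = ((512:ℚ)/1889) ^ (m::M).length := by
          rw [List.length_cons, pow_succ]
          ring

end TTBound

section MainCount

open Finset

variable {Δ : Type*} [DecidableEq Δ]

lemma card_LW_le (q : List Δ) (ℓ : ℕ) :
    (LW q ℓ).card ≤ (TT (q.dedup.map (fun v => q.count v)) ℓ).card := by
  classical
  set M := q.dedup.map (fun v => q.count v) with hM
  have hM1 : ∀ m ∈ M, 1 ≤ m := by
    intro m hm
    rcases List.mem_map.1 hm with ⟨v, hv, rfl⟩
    exact List.count_pos_iff.2 (List.mem_dedup.1 hv)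
  apply Finset.card_le_card_of_injOn
    (fun x => if h : IsInstance q x then q.dedup.map (fun v => h.choose v) else [])
  · -- maps into TT M ℓ
    intro x hx
    rcases mem_LW.1 hx with ⟨hlen, hinst⟩
    simp only [Finset.mem_coe, dif_pos hinst]
    set g := hinst.choose with hgdef
    have hgspec := hinst.choose_spec
    rcases hgspec with ⟨hg1, hg2⟩
    rw [mem_TT M hM1]
    refine ⟨by simp [hM], ?_, ?_⟩
    · intro w hw
      rcases List.mem_map.1 hw with ⟨v, _, rfl⟩
      exact hg1 v
    · -- weighted sum of lengths is ℓ
      rw [hM]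
      rw [List.zipWith_map (f := fun m (w : List (Fin 2)) => m * w.length)
        (g := fun v => q.count v) (h := fun v => g v) (l₁ := q.dedup) (l₂ := q.dedup)]
      rw [List.zipWith_self]
      have e1 : (List.map (fun a => q.count a * (g a).length) q.dedup).sum
          = ∑ v ∈ q.toFinset, q.count v * (g v).length := by
        have hnd := List.nodup_dedup q
        have := List.sum_toFinset (fun a => q.count a * (g a).length) hnd
        rw [← this]
        congr 1
        ext a
        simp [List.mem_dedup]
      rw [e1]
      have e2 : x.length = ∑ v ∈ q.toFinset, q.count v * (g v).length := by
        rw [← hg2, List.length_flatten, List.map_map]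
        have h3 := Finset.sum_list_map_count q (fun v => (g v).length)
        have h4 : (List.map (List.length ∘ g) q).sum = (List.map (fun v => (g v).length) q).sum := by
          congr 1
        rw [← hgdef, h4, h3]
        simp [smul_eq_mul]
      omega
  · -- injective on LW
    intro x1 hx1 x2 hx2 heq
    simp only at heq
    have h1 : IsInstance q x1 := (mem_LW.1 (by exact_mod_cast hx1)).2
    have h2 : IsInstance q x2 := (mem_LW.1 (by exact_mod_cast hx2)).2
    rw [dif_pos h1, dif_pos h2] at heq
    have hfun : ∀ v ∈ q.dedup, h1.choose v = h2.choose v := List.map_eq_map_iff.1 heq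
    have hmapeq : q.map (fun v => h1.choose v) = q.map (fun v => h2.choose v) :=
      List.map_congr_left (fun a ha => hfun a (List.mem_dedup.2 ha))
    have e1 := h1.choose_spec.2
    have e2 := h2.choose_spec.2
    rw [← e1, ← e2, hmapeq]

lemma key_step (q : List Δ) (hq : q ≠ []) (n : ℕ) :
    2 * (AW q n).card ≤ (AW q (n+1)).card +
      ∑ ℓ ∈ Finset.Icc 1 (n+1), (LW q ℓ).card * (AW q (n+1-ℓ)).card := by
  classical
  set E := ((AW q n) ×ˢ (Finset.univ : Finset (Fin 2))).image
    (fun p : List (Fin 2) × Fin 2 => p.1 ++ [p.2]) with hE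
  have hcardE : E.card = 2 * (AW q n).card := by
    rw [hE, Finset.card_image_of_injOn, Finset.card_product]
    · simp [mul_comm]
    · rintro ⟨w, b⟩ hw ⟨w', b'⟩ hw' heq
      simp only [Finset.mem_coe, Finset.mem_product] at hw hw'
      have hl : w.length = w'.length := by
        rw [(mem_AW.1 hw.1).1, (mem_AW.1 hw'.1).1]
      simp only at heq
      rcases List.append_inj heq hl with ⟨rfl, h2⟩
      simp only [List.cons.injEq] at h2
      simp [h2.1]
  have hsub : E ⊆ (AW q (n+1)) ∪ (Finset.Icc 1 (n+1)).biUnion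
      (fun ℓ => ((LW q ℓ) ×ˢ (AW q (n+1-ℓ))).image (fun p => p.2 ++ p.1)) := by
    intro w' hw'
    rcases Finset.mem_image.1 hw' with ⟨⟨w, b⟩, hmem, rfl⟩
    have hw : w ∈ AW q n := (Finset.mem_product.1 hmem).1
    rcases mem_AW.1 hw with ⟨hwlen, hwav⟩
    simp only at hw' ⊢
    by_cases hA : Avoids (w ++ [b]) q
    · exact Finset.mem_union_left _ (mem_AW.2 ⟨by simp [hwlen], hA⟩)
    · apply Finset.mem_union_right
      rw [Avoids] at hA
      push_neg at hA
      rcases hA with ⟨x, hxinf, hxinst⟩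
      have hxne : x ≠ [] := hxinst.ne_nil hq
      rcases hxinf with ⟨s, t, hst⟩
      have ht : t = [] := by
        rcases List.eq_nil_or_concat t with rfl | ⟨t', c, rfl⟩
        · rfl
        · exfalso
          have hst' : (s ++ x ++ t') ++ [c] = w ++ [b] := by
            rw [← hst]; simp [List.concat_eq_append]
          have hlc : (s ++ x ++ t').length = w.length := by
            have := congrArg List.length hst'
            simp at this ⊢
            omega
          rcases List.append_inj hst' hlc with ⟨hw2, -⟩
          exact hwav x ⟨s, t', hw2⟩ hxinst
      subst ht
      rw [List.append_nil] at hst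
      set ℓ := x.length with hℓ
      have hℓ1 : 1 ≤ ℓ := List.length_pos_iff.2 hxne
      have hlens : s.length + ℓ = n + 1 := by
        have := congrArg List.length hst
        simp at this
        omega
      rcases List.eq_nil_or_concat x with rfl | ⟨x', c', hx'⟩
      · exact absurd rfl hxne
      · have hst' : (s ++ x') ++ [c'] = w ++ [b] := by
          rw [← hst, hx']; simp [List.concat_eq_append]
        have hlc : (s ++ x').length = w.length := by
          have := congrArg List.length hst'
          simp at this ⊢
          omega
        rcases List.append_inj hst' hlc with ⟨hw2, -⟩
        have hspre : s <+: w := ⟨x', hw2⟩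
        have hsav : Avoids s q := avoids_of_infix hwav hspre.isInfix
        apply Finset.mem_biUnion.2
        refine ⟨ℓ, Finset.mem_Icc.2 ⟨hℓ1, by omega⟩, ?_⟩
        apply Finset.mem_image.2
        have hsmem : s ∈ AW q (n+1-ℓ) := mem_AW.2 ⟨by omega, hsav⟩
        refine ⟨(x, s), Finset.mem_product.2 ⟨mem_LW.2 ⟨rfl, hxinst⟩, hsmem⟩, ?_⟩
        simpa using hst
  calc 2 * (AW q n).card = E.card := hcardE.symm
    _ ≤ ((AW q (n+1)) ∪ (Finset.Icc 1 (n+1)).biUnion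
        (fun ℓ => ((LW q ℓ) ×ˢ (AW q (n+1-ℓ))).image (fun p => p.2 ++ p.1))).card :=
        Finset.card_le_card hsub
    _ ≤ (AW q (n+1)).card + ((Finset.Icc 1 (n+1)).biUnion
        (fun ℓ => ((LW q ℓ) ×ˢ (AW q (n+1-ℓ))).image (fun p => p.2 ++ p.1))).card :=
        Finset.card_union_le _ _
    _ ≤ (AW q (n+1)).card + ∑ ℓ ∈ Finset.Icc 1 (n+1),
        (((LW q ℓ) ×ˢ (AW q (n+1-ℓ))).image (fun p => p.2 ++ p.1)).card := by
        gcongr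
        exact Finset.card_biUnion_le
    _ ≤ (AW q (n+1)).card + ∑ ℓ ∈ Finset.Icc 1 (n+1), (LW q ℓ).card * (AW q (n+1-ℓ)).card := by
        gcongr with ℓ hℓ
        calc (((LW q ℓ) ×ˢ (AW q (n+1-ℓ))).image (fun p => p.2 ++ p.1)).card
            ≤ ((LW q ℓ) ×ˢ (AW q (n+1-ℓ))).card := Finset.card_image_le
          _ = (LW q ℓ).card * (AW q (n+1-ℓ)).card := Finset.card_product _ _

end MainCount

section Growth

open Finset

variable {Δ : Type*} [DecidableEq Δ]

lemma sum_LW_bound (q : List Δ) (hcnt : ∀ v ∈ q, 4 ≤ q.count v) (hk2 : 2 ≤ q.toFinset.card)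
    (n : ℕ) :
    (∑ ℓ ∈ Finset.Icc 1 (n+1), ((LW q ℓ).card : ℚ) * ((4:ℚ)/7)^ℓ) ≤ 1/7 := by
  set M := q.dedup.map (fun v => q.count v) with hM
  have hM4 : ∀ m ∈ M, 4 ≤ m := by
    intro m hm
    rcases List.mem_map.1 hm with ⟨v, hv, rfl⟩
    exact hcnt v (List.mem_dedup.1 hv)
  have hlenM : 2 ≤ M.length := by
    rw [hM, List.length_map, ← List.card_toFinset]
    exact hk2
  have hG1 : ((512:ℚ)/1889) ≤ 1 := by norm_num
  have hG0 : (0:ℚ) ≤ 512/1889 := by norm_num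
  calc (∑ ℓ ∈ Finset.Icc 1 (n+1), ((LW q ℓ).card : ℚ) * ((4:ℚ)/7)^ℓ)
      ≤ ∑ ℓ ∈ Finset.Icc 1 (n+1), ((TT M ℓ).card : ℚ) * ((4:ℚ)/7)^ℓ := by
        apply Finset.sum_le_sum
        intro ℓ _
        apply mul_le_mul_of_nonneg_right _ (by positivity)
        exact_mod_cast card_LW_le q ℓ
    _ ≤ ∑ ℓ ∈ Finset.range (n+2), ((TT M ℓ).card : ℚ) * ((4:ℚ)/7)^ℓ := by
        apply Finset.sum_le_sum_of_subset_of_nonneg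
        · intro ℓ hℓ
          rcases Finset.mem_Icc.1 hℓ with ⟨-, h2⟩
          exact Finset.mem_range.2 (by omega)
        · intro ℓ _ _
          positivity
    _ ≤ ((512:ℚ)/1889) ^ M.length := TT_sum_bound M hM4 (n+1)
    _ ≤ ((512:ℚ)/1889) ^ 2 := pow_le_pow_of_le_one hG0 hG1 hlenM
    _ ≤ 1/7 := by norm_num

lemma AW_growth (q : List Δ) (hq : q ≠ []) (hcnt : ∀ v ∈ q, 4 ≤ q.count v)
    (hk2 : 2 ≤ q.toFinset.card) :
    ∀ n, 7 * ((AW q n).card : ℚ) ≤ 4 * ((AW q (n+1)).card : ℚ) := by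
  intro n
  induction n using Nat.strong_induction_on with
  | _ n IH =>
  have hratio : ∀ d j, j + d = n → ((AW q j).card : ℚ) ≤ ((4:ℚ)/7)^d * ((AW q n).card : ℚ) := by
    intro d
    induction d with
    | zero => intro j hj; simp [show j = n from by omega]
    | succ d IHd =>
      intro j hj
      have h1 : 7 * ((AW q j).card : ℚ) ≤ 4 * ((AW q (j+1)).card : ℚ) := IH j (by omega)
      have h2 : ((AW q (j+1)).card : ℚ) ≤ ((4:ℚ)/7)^d * ((AW q n).card : ℚ) :=
        IHd (j+1) (by omega)
      calc ((AW q j).card : ℚ) ≤ ((4:ℚ)/7) * ((AW q (j+1)).card : ℚ) := by linarith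
        _ ≤ ((4:ℚ)/7) * (((4:ℚ)/7)^d * ((AW q n).card : ℚ)) := by
            apply mul_le_mul_of_nonneg_left h2 (by norm_num)
        _ = ((4:ℚ)/7)^(d+1) * ((AW q n).card : ℚ) := by ring
  have hkey : 2 * ((AW q n).card : ℚ) ≤ ((AW q (n+1)).card : ℚ) +
      ∑ ℓ ∈ Finset.Icc 1 (n+1), ((LW q ℓ).card : ℚ) * ((AW q (n+1-ℓ)).card : ℚ) := by
    have := key_step q hq n
    have hcast : ((2 * (AW q n).card : ℕ) : ℚ) ≤
        (((AW q (n+1)).card + ∑ ℓ ∈ Finset.Icc 1 (n+1), (LW q ℓ).card * (AW q (n+1-ℓ)).card : ℕ) : ℚ) := by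
      exact_mod_cast this
    push_cast at hcast
    exact_mod_cast hcast
  have hbound : (∑ ℓ ∈ Finset.Icc 1 (n+1), ((LW q ℓ).card : ℚ) * ((AW q (n+1-ℓ)).card : ℚ))
      ≤ (1/4 : ℚ) * ((AW q n).card : ℚ) := by
    have hterm : ∀ ℓ ∈ Finset.Icc 1 (n+1),
        ((LW q ℓ).card : ℚ) * ((AW q (n+1-ℓ)).card : ℚ)
          ≤ (((LW q ℓ).card : ℚ) * ((4:ℚ)/7)^(ℓ-1)) * ((AW q n).card : ℚ) := by
      intro ℓ hℓ
      rcases Finset.mem_Icc.1 hℓ with ⟨h1, h2⟩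
      have := hratio (ℓ-1) (n+1-ℓ) (by omega)
      calc ((LW q ℓ).card : ℚ) * ((AW q (n+1-ℓ)).card : ℚ)
          ≤ ((LW q ℓ).card : ℚ) * (((4:ℚ)/7)^(ℓ-1) * ((AW q n).card : ℚ)) := by
            apply mul_le_mul_of_nonneg_left this (by positivity)
        _ = (((LW q ℓ).card : ℚ) * ((4:ℚ)/7)^(ℓ-1)) * ((AW q n).card : ℚ) := by ring
    calc (∑ ℓ ∈ Finset.Icc 1 (n+1), ((LW q ℓ).card : ℚ) * ((AW q (n+1-ℓ)).card : ℚ))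
        ≤ ∑ ℓ ∈ Finset.Icc 1 (n+1),
            (((LW q ℓ).card : ℚ) * ((4:ℚ)/7)^(ℓ-1)) * ((AW q n).card : ℚ) :=
          Finset.sum_le_sum hterm
      _ = (∑ ℓ ∈ Finset.Icc 1 (n+1), ((LW q ℓ).card : ℚ) * ((4:ℚ)/7)^(ℓ-1)) * ((AW q n).card : ℚ) := by
          rw [Finset.sum_mul]
      _ ≤ (1/4 : ℚ) * ((AW q n).card : ℚ) := by
          apply mul_le_mul_of_nonneg_right _ (by positivity)
          have hS := sum_LW_bound q hcnt hk2 n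
          have hconv : (∑ ℓ ∈ Finset.Icc 1 (n+1), ((LW q ℓ).card : ℚ) * ((4:ℚ)/7)^(ℓ-1))
              = (7/4 : ℚ) * ∑ ℓ ∈ Finset.Icc 1 (n+1), ((LW q ℓ).card : ℚ) * ((4:ℚ)/7)^ℓ := by
            rw [Finset.mul_sum]
            apply Finset.sum_congr rfl
            intro ℓ hℓ
            rcases Finset.mem_Icc.1 hℓ with ⟨h1, -⟩
            have : ℓ = (ℓ-1) + 1 := by omega
            rw [this]
            simp only [Nat.add_sub_cancel]
            rw [pow_succ]
            ring
          rw [hconv]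
          linarith
  have hF0 : (0:ℚ) ≤ ((AW q n).card : ℚ) := by positivity
  linarith

lemma AW_pos (q : List Δ) (hq : q ≠ []) (hcnt : ∀ v ∈ q, 4 ≤ q.count v)
    (hk2 : 2 ≤ q.toFinset.card) : ∀ n, 0 < (AW q n).card := by
  intro n
  induction n with
  | zero =>
    apply Finset.card_pos.2
    refine ⟨[], mem_AW.2 ⟨rfl, ?_⟩⟩
    intro x hx hinst
    exact hinst.ne_nil hq (List.eq_nil_of_infix_nil hx)
  | succ n IHn =>
    have h := AW_growth q hq hcnt hk2 n
    have h0 : (0:ℚ) < ((AW q n).card : ℚ) := by exact_mod_cast IHn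
    have : (0:ℚ) < ((AW q (n+1)).card : ℚ) := by linarith
    exact_mod_cast this

lemma exists_avoiding_word (q : List Δ) (hq : q ≠ []) (hcnt : ∀ v ∈ q, 4 ≤ q.count v)
    (hk2 : 2 ≤ q.toFinset.card) (n : ℕ) :
    ∃ w : List (Fin 2), w.length = n ∧ Avoids w q := by
  rcases Finset.card_pos.1 (AW_pos q hq hcnt hk2 n) with ⟨w, hw⟩
  exact ⟨w, mem_AW.1 hw⟩

end Growth



theorem avoid_two_of_length_ge_pow {Δ : Type*} [DecidableEq Δ]
    (k : ℕ) (hk : 0 < k) (p : List Δ) (hp : p ≠ [])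
    (hvars : p.toFinset.card = k) (hlen : 4 ^ k ≤ p.length) :
    {w : List (Fin 2) | Avoids w p}.Infinite := by

  obtain ⟨q, hq1, hq2, hq3⟩ := zimin4 k p (le_of_eq hvars) hlen
  have hex : ∀ n, ∃ w : List (Fin 2), w.length = n ∧ Avoids w q := by
    rcases Nat.lt_or_ge q.toFinset.card 2 with hcase | hcase
    · -- single-variable case: use Thue–Morse words
      have hqne : q ≠ [] := hq1
      obtain ⟨v, hv⟩ : ∃ v, v ∈ q := by
        rcases q with _ | ⟨v, q'⟩
        · exact absurd rfl hqne
        · exact ⟨v, by simp⟩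
      have hcard1 : q.toFinset.card ≤ 1 := by omega
      have hall : ∀ u ∈ q, u = v := by
        intro u hu
        exact Finset.card_le_one.1 hcard1 u (List.mem_toFinset.2 hu) v (List.mem_toFinset.2 hv)
      have hlen4 : 4 ≤ q.length := le_trans (hq3 v hv) (List.count_le_length (a := v) (l := q))
      intro n
      exact ⟨(List.range n).map tm, by simp, single_var_avoidable hall hlen4 n⟩
    · intro n
      exact exists_avoiding_word q hq1 hq3 hcase n
  set g : ℕ → List (Fin 2) := fun n => (hex n).choose with hg
  have hglen : ∀ n, (g n).length = n := fun n => (hex n).choose_spec.1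
  have hgav : ∀ n, Avoids (g n) q := fun n => (hex n).choose_spec.2
  refine Set.infinite_of_injective_forall_mem (f := g) ?_ ?_
  · intro a b hab
    have := hglen a
    rw [hab, hglen b] at this
    exact this.symm
  · intro n
    exact avoids_of_pattern_infix hq2 (hgav n)
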